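/- Let k ≥ 0, p a permutation pattern of length ℓ > k, and let q be a consecutive subpattern of p of length ℓ−k. Suppose p has an occurrence of q at consecutive positions i+1,…,i+ℓ−k. For n ≥ k, the partial permutation consisting of i holes, followed by a permutation π′ of length n−k, followed by k−i holes, avoids p if and only if π′ avoids q. Consequently s_n^k(p) ≥ s_{n−k}^0(q). -/

import Mathlib

open Finset

/-- The word `σ` contains the pattern `p`: there is a subsequence of `σ`
order-isomorphic to `p`. -/
def ContainsPat {n ℓ : ℕ} {α β : Type*} [LinearOrder α] [LinearOrder β]
    (σ : Fin n → α) (p : Fin ℓ → β) : Prop :=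
  ∃ g : Fin ℓ → Fin n, StrictMono g ∧ ∀ a b : Fin ℓ, σ (g a) < σ (g b) ↔ p a < p b

/-- `σ ∈ S_n` is an extension of the partial permutation `π`: on the non-hole
positions, the relative order of the values of `σ` matches that of `π`. -/
def IsExtension {n : ℕ} {α : Type*} [LinearOrder α]
    (σ : Equiv.Perm (Fin n)) (π : Fin n → Option α) : Prop :=
  ∀ i j : Fin n, ∀ vi vj : α, π i = some vi → π j = some vj → (σ i < σ j ↔ vi < vj)

/-- The partial permutation `π` avoids the pattern `p`: every extension avoids `p`. -/
def PPAvoids {n ℓ : ℕ} {α β : Type*} [LinearOrder α] [LinearOrder β]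
    (π : Fin n → Option α) (p : Fin ℓ → β) : Prop :=
  ∀ σ : Equiv.Perm (Fin n), IsExtension σ π → ¬ ContainsPat (⇑σ) p

/-- `π` is a partial permutation of length `n` with `k` holes: each value of
`{1,…,n-k}` appears exactly once and there are exactly `k` holes. -/
def IsPPerm {n : ℕ} (k : ℕ) (π : Fin n → Option (Fin (n - k))) : Prop :=
  (Finset.univ.filter fun i => π i = none).card = k ∧
    ∀ v : Fin (n - k), ∃! i : Fin n, π i = some v

/-- `π` is a partial permutation whose holes are exactly at the positions in `H`. -/
def IsPPermH {n : ℕ} (H : Finset (Fin n)) (π : Fin n → Option (Fin (n - H.card))) : Prop :=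
  (∀ i, π i = none ↔ i ∈ H) ∧ ∀ v : Fin (n - H.card), ∃! i : Fin n, π i = some v

/-- `s_n^k(p)`: the number of `p`-avoiding partial permutations of length `n`
with `k` holes. -/
noncomputable def snk (n k : ℕ) {ℓ : ℕ} (p : Fin ℓ → Fin ℓ) : ℕ :=
  Nat.card {π : Fin n → Option (Fin (n - k)) // IsPPerm k π ∧ PPAvoids π p}

/-- `s_n^H(p)`: the number of `p`-avoiding partial permutations of length `n`
with hole set `H`. -/
noncomputable def snH {n ℓ : ℕ} (H : Finset (Fin n)) (p : Fin ℓ → Fin ℓ) : ℕ :=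
  Nat.card {π : Fin n → Option (Fin (n - H.card)) // IsPPermH H π ∧ PPAvoids π p}

/-- The number of permutations of length `m` avoiding the pattern `p`. -/
noncomputable def avoidCount (m : ℕ) {ℓ : ℕ} (p : Fin ℓ → Fin ℓ) : ℕ :=
  Nat.card {σ : Equiv.Perm (Fin m) // ¬ ContainsPat (⇑σ) p}

/-- `p` is a Baxter permutation: no indices `a < b < c = b+1 < d` such that
`(p a, p b, p c, p d)` is order-isomorphic to `2413` or `3142`. -/
def IsBaxter {ℓ : ℕ} (p : Fin ℓ → Fin ℓ) : Prop :=
  ¬ ∃ a b c d : Fin ℓ, a < b ∧ (b : ℕ) + 1 = (c : ℕ) ∧ c < d ∧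
    ((p c < p a ∧ p a < p d ∧ p d < p b) ∨ (p b < p d ∧ p d < p a ∧ p a < p c))

lemma exists_perm_iso {n : ℕ} {α : Type*} [LinearOrder α] (f : Fin n → α)
    (hf : Function.Injective f) :
    ∃ σ : Equiv.Perm (Fin n), ∀ s t, σ s < σ t ↔ f s < f t := by
  classical
  set s : Finset α := Finset.image f Finset.univ with hs
  have hcard : s.card = n := by
    rw [hs, Finset.card_image_of_injective _ hf, Finset.card_univ, Fintype.card_fin]
  let e := s.orderIsoOfFin hcard
  have hmem : ∀ t, f t ∈ s := fun t => Finset.mem_image_of_mem f (Finset.mem_univ t)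
  let φ : Fin n → Fin n := fun t => e.symm ⟨f t, hmem t⟩
  have hinj : Function.Injective φ := by
    intro a b h
    have := e.symm.injective h
    exact hf (Subtype.ext_iff.mp this)
  refine ⟨Equiv.ofBijective φ (Finite.injective_iff_bijective.mp hinj), fun a b => ?_⟩
  show φ a < φ b ↔ _
  have : φ a < φ b ↔ (⟨f a, hmem a⟩ : s) < ⟨f b, hmem b⟩ := e.symm.lt_iff_lt
  rw [this, Subtype.mk_lt_mk]

lemma strictMono_fin_add {ℓ n : ℕ} {g : Fin ℓ → Fin n} (hg : StrictMono g) :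
    ∀ d : ℕ, ∀ a b : Fin ℓ, (a : ℕ) + d = (b : ℕ) → (g a : ℕ) + d ≤ (g b : ℕ) := by
  intro d
  induction d with
  | zero => intro a b h; have : a = b := Fin.ext (by omega); simp [this]
  | succ d ih =>
    intro a b h
    have hb' : (a : ℕ) + d < ℓ := by have := b.isLt; omega
    have h1 := ih a ⟨(a : ℕ) + d, hb'⟩ rfl
    have h2 : g ⟨(a : ℕ) + d, hb'⟩ < g b := hg (by rw [Fin.lt_def]; simpa using by omega)
    rw [Fin.lt_def] at h2
    omega

/-- If `q` is a consecutive subpattern of `p` occurring at positions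
`i+1, …, i+(ℓ-k)`, then the partial permutation consisting of `i` holes,
a permutation `π'` of length `n-k`, and `k-i` holes avoids `p` iff `π'`
avoids `q`; consequently `s_n^k(p) ≥ s_{n-k}^0(q)`. -/
theorem consecutive_subpattern_bound (k ℓ : ℕ) (hℓ : k < ℓ)
    (p : Fin ℓ → Fin ℓ) (hp : Function.Bijective p)
    (q : Fin (ℓ - k) → Fin (ℓ - k)) (i : ℕ) (hi : i + (ℓ - k) ≤ ℓ)
    (hq : ∀ a b : Fin (ℓ - k),
      q a < q b ↔ p ⟨i + a, by have := a.isLt; omega⟩ < p ⟨i + b, by have := b.isLt; omega⟩)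
    (n : ℕ) (hn : k ≤ n) :
    (∀ π' : Equiv.Perm (Fin (n - k)),
      PPAvoids (fun t : Fin n =>
          if h : i ≤ (t : ℕ) ∧ (t : ℕ) < i + (n - k) then
            some (π' ⟨(t : ℕ) - i, by omega⟩) else none) p
        ↔ ¬ ContainsPat (⇑π') q) ∧
    avoidCount (n - k) q ≤ snk n k p := by
  classical
  have hik : i ≤ k := by omega
  have key : ∀ π' : Equiv.Perm (Fin (n - k)),
      PPAvoids (fun t : Fin n =>
          if h : i ≤ (t : ℕ) ∧ (t : ℕ) < i + (n - k) then
            some (π' ⟨(t : ℕ) - i, by omega⟩) else none) p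
        ↔ ¬ ContainsPat (⇑π') q := by
    intro π'
    constructor
    · -- PPAvoids → ¬ contains q : contrapositive, construct extension containing p
      intro hav hcon
      obtain ⟨g, hg, hiso⟩ := hcon
      have hrm : ℓ - k ≤ n - k := by
        have := Fintype.card_le_of_injective g hg.injective
        simpa using this
      have hln : ℓ ≤ n := by omega
      -- hole values, packaged opaquely
      obtain ⟨hv, K1, K2, K3, hwh⟩ :
          ∃ hv : Fin ℓ → ℚ,
            (∀ (a : Fin ℓ) (c : Fin (ℓ - k)),
              p ⟨i + c, by have := c.isLt; omega⟩ < p a → ((π' (g c) : ℕ) : ℚ) < hv a) ∧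
            (∀ (a : Fin ℓ) (c : Fin (ℓ - k)),
              p a < p ⟨i + c, by have := c.isLt; omega⟩ → hv a < ((π' (g c) : ℕ) : ℚ)) ∧
            (∀ a b : Fin ℓ, p a < p b → hv a < hv b) ∧
            (∀ (w : Fin (n - k)) (a : Fin ℓ), ((w : ℕ) : ℚ) ≠ hv a) := by
        set B : Fin ℓ → ℕ := fun a =>
          (Finset.univ.filter fun c : Fin (ℓ - k) =>
            p ⟨i + c, by have := c.isLt; omega⟩ < p a).sup
            (fun c => (π' (g c) : ℕ) + 1) with hB_def
        refine ⟨fun a => (B a : ℚ) - 1 + (((p a : ℕ) : ℚ) + 1) / ((ℓ : ℚ) + 2),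
          ?_, ?_, ?_, ?_⟩
        all_goals
          have hx0 : ∀ a : Fin ℓ, 0 < (((p a : ℕ) : ℚ) + 1) / ((ℓ : ℚ) + 2) := by
            intro a; positivity
          have hx1 : ∀ a : Fin ℓ, (((p a : ℕ) : ℚ) + 1) / ((ℓ : ℚ) + 2) < 1 := by
            intro a
            rw [div_lt_one (by positivity)]
            have h : ((p a : ℕ) : ℚ) < (ℓ : ℚ) := by exact_mod_cast (p a).isLt
            linarith
        · intro a c hc
          have hB : (π' (g c) : ℕ) + 1 ≤ B a := by
            rw [hB_def]
            beta_reduce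
            exact Finset.le_sup (f := fun c : Fin (ℓ - k) => (π' (g c) : ℕ) + 1)
              (Finset.mem_filter.mpr ⟨Finset.mem_univ c, hc⟩)
          have h1 : ((π' (g c) : ℕ) : ℚ) + 1 ≤ (B a : ℚ) := by exact_mod_cast hB
          have h2 := hx0 a
          simp only
          linarith
        · intro a c hc
          have hB : B a ≤ (π' (g c) : ℕ) := by
            rw [hB_def]
            apply Finset.sup_le
            intro c' hc'
            have h1 : p ⟨i + c', by have := c'.isLt; omega⟩
                < p ⟨i + c, by have := c.isLt; omega⟩ :=
              lt_trans (Finset.mem_filter.mp hc').2 hc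
            have h2 : q c' < q c := (hq c' c).mpr h1
            have h3 : π' (g c') < π' (g c) := (hiso c' c).mpr h2
            rw [Fin.lt_def] at h3
            omega
          have h4 : (B a : ℚ) ≤ ((π' (g c) : ℕ) : ℚ) := by exact_mod_cast hB
          have h5 := hx1 a
          simp only
          linarith
        · intro a b hab
          have hBle : B a ≤ B b := by
            rw [hB_def]
            apply Finset.sup_mono
            intro c hc
            rw [Finset.mem_filter] at hc ⊢
            exact ⟨hc.1, lt_trans hc.2 hab⟩
          have h1 : (B a : ℚ) ≤ (B b : ℚ) := by exact_mod_cast hBle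
          have hpp : ((p a : ℕ) : ℚ) < ((p b : ℕ) : ℚ) := by exact_mod_cast hab
          have h2 : (((p a : ℕ) : ℚ) + 1) / ((ℓ : ℚ) + 2)
              < (((p b : ℕ) : ℚ) + 1) / ((ℓ : ℚ) + 2) := by
            rw [div_lt_div_iff₀ (by positivity) (by positivity)]
            nlinarith [show (0:ℚ) < (ℓ:ℚ) + 2 by positivity]
          simp only
          linarith
        · intro w a
          have h0 := hx0 a
          have h1 := hx1 a
          rcases le_or_gt (B a) (w : ℕ) with h | h
          · have h2 : (B a : ℚ) ≤ ((w : ℕ) : ℚ) := by exact_mod_cast h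
            apply ne_of_gt
            simp only
            linarith
          · have h2 : ((w : ℕ) : ℚ) + 1 ≤ (B a : ℚ) := by exact_mod_cast h
            apply ne_of_lt
            simp only
            linarith
      obtain ⟨f, hfwin, hfhole1, hfhole2⟩ :
          ∃ f : Fin n → ℚ,
            (∀ t : Fin n, (h : i ≤ (t : ℕ) ∧ (t : ℕ) < i + (n - k)) →
              f t = ((π' ⟨(t : ℕ) - i, by omega⟩ : ℕ) : ℚ)) ∧
            (∀ t : Fin n, (ht : (t : ℕ) < i) → f t = hv ⟨(t : ℕ), by omega⟩) ∧
            (∀ t : Fin n, i + (n - k) ≤ (t : ℕ) →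
              f t = hv ⟨(t : ℕ) + ℓ - n, by have := t.isLt; omega⟩) := by
        refine ⟨fun t =>
          if h : i ≤ (t : ℕ) ∧ (t : ℕ) < i + (n - k) then
            ((π' ⟨(t : ℕ) - i, by omega⟩ : ℕ) : ℚ)
          else if h2 : (t : ℕ) < i then hv ⟨(t : ℕ), by omega⟩
          else hv ⟨(t : ℕ) + ℓ - n, by have := t.isLt; omega⟩, ?_, ?_, ?_⟩
        · intro t h; simp only; rw [dif_pos h]
        · intro t h; simp only; rw [dif_neg (by omega), dif_pos h]
        · intro t h; simp only; rw [dif_neg (by omega), dif_neg (by omega)]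
      obtain ⟨G, hGv1, hGvm, hGv3⟩ :
          ∃ G : Fin ℓ → Fin n,
            (∀ a : Fin ℓ, (a : ℕ) < i → (G a : ℕ) = (a : ℕ)) ∧
            (∀ a : Fin ℓ, i ≤ (a : ℕ) → (a : ℕ) < i + (ℓ - k) →
              ∃ c : Fin (ℓ - k), (c : ℕ) = (a : ℕ) - i ∧ (G a : ℕ) = i + (g c : ℕ)) ∧
            (∀ a : Fin ℓ, i + (ℓ - k) ≤ (a : ℕ) → (G a : ℕ) = (a : ℕ) + n - ℓ) := by
        refine ⟨fun a =>
          if h : (a : ℕ) < i then ⟨(a : ℕ), by omega⟩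
          else if h2 : (a : ℕ) < i + (ℓ - k) then
            ⟨i + (g ⟨(a : ℕ) - i, by omega⟩ : ℕ), by
              have := (g ⟨(a : ℕ) - i, by omega⟩).isLt; omega⟩
          else ⟨(a : ℕ) + n - ℓ, by have := a.isLt; omega⟩, ?_, ?_, ?_⟩
        · intro a h; simp only; rw [dif_pos h]
        · intro a h1 h2
          refine ⟨⟨(a : ℕ) - i, by omega⟩, rfl, ?_⟩
          simp only; rw [dif_neg (by omega), dif_pos h2]
        · intro a h; simp only; rw [dif_neg (by omega), dif_neg (by omega)]
      have hGmid : ∀ (a : Fin ℓ), i ≤ (a : ℕ) → (a : ℕ) < i + (ℓ - k) →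
          ∃ c : Fin (ℓ - k), (c : ℕ) = (a : ℕ) - i ∧ (G a : ℕ) = i + (g c : ℕ) ∧
            f (G a) = ((π' (g c) : ℕ) : ℚ) ∧
            p ⟨i + (c : ℕ), by have := c.isLt; omega⟩ = p a := by
        intro a h1 h2
        obtain ⟨c, hc1, hc2⟩ := hGvm a h1 h2
        have hgb := (g c).isLt
        refine ⟨c, hc1, hc2, ?_, ?_⟩
        · rw [hfwin (G a) (by omega)]
          exact congrArg (fun x : Fin (n - k) => ((x : ℕ) : ℚ))
            (congrArg π' (Fin.ext (by simp only; omega)))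
        · exact congrArg p (Fin.ext (by simp only; omega))
      have hfG1 : ∀ a : Fin ℓ, (a : ℕ) < i → f (G a) = hv a := by
        intro a h
        have h1 := hGv1 a h
        rw [hfhole1 (G a) (by omega)]
        exact congrArg hv (Fin.ext h1)
      have hfG3 : ∀ a : Fin ℓ, i + (ℓ - k) ≤ (a : ℕ) → f (G a) = hv a := by
        intro a h
        have h1 := hGv3 a h
        have h2 := a.isLt
        rw [hfhole2 (G a) (by omega)]
        exact congrArg hv (Fin.ext (by simp only; omega))
      have hmono : ∀ a b : Fin ℓ, p a < p b → f (G a) < f (G b) := by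
        intro a b hab
        rcases lt_or_ge (a : ℕ) i with ha1 | ha1
        · have hfa : f (G a) = hv a := hfG1 a ha1
          rcases lt_or_ge (b : ℕ) i with hb1 | hb1
          · rw [hfa, hfG1 b hb1]; exact K3 a b hab
          · rcases lt_or_ge (b : ℕ) (i + (ℓ - k)) with hb2 | hb2
            · obtain ⟨cb, hcb1, hcb2, hcb3, hcb4⟩ := hGmid b hb1 hb2
              rw [hfa, hcb3]
              exact K2 a cb (lt_of_lt_of_eq hab hcb4.symm)
            · rw [hfa, hfG3 b hb2]; exact K3 a b hab
        · rcases lt_or_ge (a : ℕ) (i + (ℓ - k)) with ha2 | ha2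
          · obtain ⟨ca, hca1, hca2, hca3, hca4⟩ := hGmid a ha1 ha2
            rcases lt_or_ge (b : ℕ) i with hb1 | hb1
            · rw [hca3, hfG1 b hb1]
              exact K1 b ca (lt_of_eq_of_lt hca4 hab)
            · rcases lt_or_ge (b : ℕ) (i + (ℓ - k)) with hb2 | hb2
              · obtain ⟨cb, hcb1, hcb2, hcb3, hcb4⟩ := hGmid b hb1 hb2
                rw [hca3, hcb3, Nat.cast_lt]
                have h5 : π' (g ca) < π' (g cb) := (hiso ca cb).mpr ((hq ca cb).mpr
                  (lt_of_eq_of_lt hca4 (lt_of_lt_of_eq hab hcb4.symm)))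
                exact Fin.lt_def.mp h5
              · rw [hca3, hfG3 b hb2]
                exact K1 b ca (lt_of_eq_of_lt hca4 hab)
          · have hfa : f (G a) = hv a := hfG3 a ha2
            rcases lt_or_ge (b : ℕ) i with hb1 | hb1
            · rw [hfa, hfG1 b hb1]; exact K3 a b hab
            · rcases lt_or_ge (b : ℕ) (i + (ℓ - k)) with hb2 | hb2
              · obtain ⟨cb, hcb1, hcb2, hcb3, hcb4⟩ := hGmid b hb1 hb2
                rw [hfa, hcb3]
                exact K2 a cb (lt_of_lt_of_eq hab hcb4.symm)
              · rw [hfa, hfG3 b hb2]; exact K3 a b hab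
      have hGmono : StrictMono G := by
        intro a b hab
        rw [Fin.lt_def] at hab ⊢
        rcases lt_or_ge (a : ℕ) i with ha1 | ha1
        · rw [hGv1 a ha1]
          rcases lt_or_ge (b : ℕ) i with hb1 | hb1
          · rw [hGv1 b hb1]; omega
          · rcases lt_or_ge (b : ℕ) (i + (ℓ - k)) with hb2 | hb2
            · obtain ⟨cb, hcb1, hcb2⟩ := hGvm b hb1 hb2
              rw [hcb2]; omega
            · rw [hGv3 b hb2]; omega
        · rcases lt_or_ge (a : ℕ) (i + (ℓ - k)) with ha2 | ha2
          · obtain ⟨ca, hca1, hca2⟩ := hGvm a ha1 ha2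
            rw [hca2]
            rcases lt_or_ge (b : ℕ) (i + (ℓ - k)) with hb2 | hb2
            · obtain ⟨cb, hcb1, hcb2⟩ := hGvm b (by omega) hb2
              rw [hcb2]
              have h5 : g ca < g cb := hg (by rw [Fin.lt_def]; omega)
              rw [Fin.lt_def] at h5
              omega
            · rw [hGv3 b hb2]
              have := (g ca).isLt
              omega
          · rw [hGv3 a ha2, hGv3 b (by omega)]
            have := a.isLt
            omega
      have hvne : ∀ a b : Fin ℓ, a ≠ b → hv a ≠ hv b := by
        intro a b hab
        rcases lt_trichotomy (p a) (p b) with h | h | h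
        · exact ne_of_lt (K3 a b h)
        · exact absurd (hp.injective h) hab
        · exact ne_of_gt (K3 b a h)
      have hfinj : Function.Injective f := by
        intro s t hst
        by_contra hne
        have hsv : (s : ℕ) ≠ (t : ℕ) := fun h => hne (Fin.ext h)
        rcases Decidable.em (i ≤ (s : ℕ) ∧ (s : ℕ) < i + (n - k)) with hs | hs
        · rcases Decidable.em (i ≤ (t : ℕ) ∧ (t : ℕ) < i + (n - k)) with ht | ht
          · rw [hfwin s hs, hfwin t ht] at hst
            have h1 : π' ⟨(s : ℕ) - i, by omega⟩ = π' ⟨(t : ℕ) - i, by omega⟩ :=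
              Fin.ext (by exact_mod_cast hst)
            have h2 := congrArg Fin.val (π'.injective h1)
            simp only at h2
            omega
          · rcases lt_or_ge (t : ℕ) i with ht2 | ht2
            · rw [hfwin s hs, hfhole1 t ht2] at hst
              exact hwh _ _ hst
            · rw [hfwin s hs, hfhole2 t (by omega)] at hst
              exact hwh _ _ hst
        · rcases Decidable.em (i ≤ (t : ℕ) ∧ (t : ℕ) < i + (n - k)) with ht | ht
          · rcases lt_or_ge (s : ℕ) i with hs2 | hs2
            · rw [hfhole1 s hs2, hfwin t ht] at hst
              exact hwh _ _ hst.symm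
            · rw [hfhole2 s (by omega), hfwin t ht] at hst
              exact hwh _ _ hst.symm
          · rcases lt_or_ge (s : ℕ) i with hs2 | hs2 <;>
              rcases lt_or_ge (t : ℕ) i with ht2 | ht2
            · rw [hfhole1 s hs2, hfhole1 t ht2] at hst
              refine hvne _ _ ?_ hst
              intro h
              have := congrArg Fin.val h
              simp only at this
              omega
            · rw [hfhole1 s hs2, hfhole2 t (by omega)] at hst
              refine hvne _ _ ?_ hst
              intro h
              have := congrArg Fin.val h
              simp only at this
              have := t.isLt
              omega
            · rw [hfhole2 s (by omega), hfhole1 t ht2] at hst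
              refine hvne _ _ ?_ hst
              intro h
              have := congrArg Fin.val h
              simp only at this
              have := s.isLt
              omega
            · rw [hfhole2 s (by omega), hfhole2 t (by omega)] at hst
              refine hvne _ _ ?_ hst
              intro h
              have := congrArg Fin.val h
              simp only at this
              have h3 := s.isLt
              have h4 := t.isLt
              omega
      obtain ⟨σ, hσ⟩ := exists_perm_iso f hfinj
      refine hav σ ?_ ⟨G, hGmono, fun a b => (hσ _ _).trans ?_⟩
      · intro s t vs vt hvs hvt
        beta_reduce at hvs hvt
        rcases Decidable.em (i ≤ (s : ℕ) ∧ (s : ℕ) < i + (n - k)) with hs | hs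
        · rcases Decidable.em (i ≤ (t : ℕ) ∧ (t : ℕ) < i + (n - k)) with ht | ht
          · rw [dif_pos hs] at hvs
            rw [dif_pos ht] at hvt
            have hvs' : π' ⟨(s : ℕ) - i, by omega⟩ = vs := Option.some.inj hvs
            have hvt' : π' ⟨(t : ℕ) - i, by omega⟩ = vt := Option.some.inj hvt
            rw [hσ s t, hfwin s hs, hfwin t ht, Nat.cast_lt, ← hvs', ← hvt']
            exact Iff.symm Fin.lt_def
          · rw [dif_neg ht] at hvt
            exact absurd hvt (by simp)
        · rw [dif_neg hs] at hvs
          exact absurd hvs (by simp)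
      · constructor
        · intro h
          rcases lt_trichotomy (p a) (p b) with h1 | h1 | h1
          · exact h1
          · have hab := hp.injective h1
            rw [hab] at h
            exact absurd h (lt_irrefl _)
          · exact absurd h (lt_asymm (hmono b a h1))
        · exact hmono a b
    · -- ¬ contains q → PPAvoids
      intro hq' σ hext hcon
      obtain ⟨g, hg, hiso⟩ := hcon
      apply hq'
      have hℓpos : 0 < ℓ := by omega
      have hlow : ∀ c : Fin (ℓ - k), i + (c : ℕ) ≤ (g ⟨i + c, by have := c.isLt; omega⟩ : ℕ) := by
        intro c
        have := strictMono_fin_add hg (i + (c : ℕ)) ⟨0, hℓpos⟩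
          ⟨i + c, by have := c.isLt; omega⟩ (by simp)
        omega
      have hhigh : ∀ c : Fin (ℓ - k),
          (g ⟨i + c, by have := c.isLt; omega⟩ : ℕ) + (ℓ - 1 - (i + c)) ≤ n - 1 := by
        intro c
        have h1 := strictMono_fin_add hg (ℓ - 1 - (i + (c : ℕ)))
          ⟨i + c, by have := c.isLt; omega⟩ ⟨ℓ - 1, by omega⟩ (by simp; have := c.isLt; omega)
        have h2 := (g ⟨ℓ - 1, by omega⟩).isLt
        have h3 : 0 < n := (g ⟨ℓ - 1, by omega⟩).pos
        omega
      have hbnd : ∀ c : Fin (ℓ - k),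
          i ≤ (g ⟨i + c, by have := c.isLt; omega⟩ : ℕ) ∧
          (g ⟨i + c, by have := c.isLt; omega⟩ : ℕ) < i + (n - k) := by
        intro c
        have h1 := hlow c
        have h2 := hhigh c
        have h3 := c.isLt
        constructor
        · omega
        · omega
      refine ⟨fun c => ⟨(g ⟨i + c, by have := c.isLt; omega⟩ : ℕ) - i, by
          have := hbnd c; omega⟩, ?_, ?_⟩
      · intro c c' hcc
        rw [Fin.lt_def] at hcc ⊢
        simp only at hcc ⊢
        have hmono : g ⟨i + c, by have := c.isLt; omega⟩ < g ⟨i + c', by have := c'.isLt; omega⟩ :=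
          hg (by rw [Fin.lt_def]; simpa using by omega)
        rw [Fin.lt_def] at hmono
        have := hbnd c
        omega
      · intro c c'
        have e1 := hext (g ⟨i + c, by have := c.isLt; omega⟩) (g ⟨i + c', by have := c'.isLt; omega⟩)
          (π' ⟨(g ⟨i + c, by have := c.isLt; omega⟩ : ℕ) - i, by have := hbnd c; omega⟩)
          (π' ⟨(g ⟨i + c', by have := c'.isLt; omega⟩ : ℕ) - i, by have := hbnd c'; omega⟩)
          (by beta_reduce; rw [dif_pos (hbnd c)]) (by beta_reduce; rw [dif_pos (hbnd c')])
        rw [← e1]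
        rw [hiso]
        exact (hq c c').symm
  refine ⟨key, ?_⟩
  have hcardwin : (Finset.univ.filter fun t : Fin n =>
      i ≤ (t : ℕ) ∧ (t : ℕ) < i + (n - k)).card = n - k := by
    have himg : (Finset.univ.filter fun t : Fin n =>
        i ≤ (t : ℕ) ∧ (t : ℕ) < i + (n - k))
        = Finset.image (fun s : Fin (n - k) =>
            (⟨i + (s : ℕ), by have := s.isLt; omega⟩ : Fin n)) Finset.univ := by
      ext t
      simp only [Finset.mem_filter, Finset.mem_univ, true_and, Finset.mem_image]
      constructor
      · rintro ⟨h1, h2⟩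
        refine ⟨⟨(t : ℕ) - i, by omega⟩, Fin.ext ?_⟩
        simp only
        omega
      · rintro ⟨s, rfl⟩
        have := s.isLt
        simp only
        omega
    rw [himg, Finset.card_image_of_injective _ ?_, Finset.card_univ, Fintype.card_fin]
    intro a b hab
    have := congrArg Fin.val hab
    simp only at this
    exact Fin.ext (by omega)
  have hPP : ∀ σ₀ : Equiv.Perm (Fin (n - k)), IsPPerm k (fun t : Fin n =>
      if h : i ≤ (t : ℕ) ∧ (t : ℕ) < i + (n - k) then
        some (σ₀ ⟨(t : ℕ) - i, by omega⟩) else none) := by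
    intro σ₀
    constructor
    · have hfe : (Finset.univ.filter fun t : Fin n =>
          (if h : i ≤ (t : ℕ) ∧ (t : ℕ) < i + (n - k) then
            some (σ₀ ⟨(t : ℕ) - i, by omega⟩) else none) = none)
          = Finset.univ.filter fun t : Fin n =>
            ¬(i ≤ (t : ℕ) ∧ (t : ℕ) < i + (n - k)) := by
        apply Finset.filter_congr
        intro t _
        by_cases h : i ≤ (t : ℕ) ∧ (t : ℕ) < i + (n - k)
        · simp [dif_pos h, h]
        · simp [dif_neg h, h]
      rw [hfe]
      have h2 := Finset.card_filter_add_card_filter_not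
        (s := (Finset.univ : Finset (Fin n)))
        (p := fun t : Fin n => i ≤ (t : ℕ) ∧ (t : ℕ) < i + (n - k))
      rw [hcardwin, Finset.card_univ, Fintype.card_fin] at h2
      omega
    · intro v
      have hvlt := (σ₀⁻¹ v).isLt
      refine ⟨⟨i + ((σ₀⁻¹ v : Fin (n - k)) : ℕ), by omega⟩, ?_, ?_⟩
      · have hc : i ≤ ((⟨i + ((σ₀⁻¹ v : Fin (n - k)) : ℕ), by omega⟩ : Fin n) : ℕ) ∧
            ((⟨i + ((σ₀⁻¹ v : Fin (n - k)) : ℕ), by omega⟩ : Fin n) : ℕ) < i + (n - k) := by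
          simp only
          omega
        beta_reduce
        rw [dif_pos hc]
        refine congrArg some ?_
        have h3 : (⟨((⟨i + ((σ₀⁻¹ v : Fin (n - k)) : ℕ), by omega⟩ : Fin n) : ℕ) - i,
            by omega⟩ : Fin (n - k)) = σ₀⁻¹ v := Fin.ext (by simp only; omega)
        exact (congrArg σ₀ h3).trans (Equiv.apply_symm_apply σ₀ v)
      · intro t ht
        beta_reduce at ht
        by_cases h : i ≤ (t : ℕ) ∧ (t : ℕ) < i + (n - k)
        · rw [dif_pos h] at ht
          have h1 := Option.some.inj ht
          have h4 : (⟨(t : ℕ) - i, by omega⟩ : Fin (n - k)) = σ₀⁻¹ v :=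
            σ₀.injective (h1.trans (Equiv.apply_symm_apply σ₀ v).symm)
          have h5 := congrArg Fin.val h4
          simp only at h5
          exact Fin.ext (by simp only; omega)
        · rw [dif_neg h] at ht
          exact absurd ht (by simp)
  let Φ : {σ' : Equiv.Perm (Fin (n - k)) // ¬ ContainsPat (⇑σ') q} →
      {π : Fin n → Option (Fin (n - k)) // IsPPerm k π ∧ PPAvoids π p} := fun σ' =>
    ⟨fun t : Fin n => if h : i ≤ (t : ℕ) ∧ (t : ℕ) < i + (n - k) then
        some (σ'.1 ⟨(t : ℕ) - i, by omega⟩) else none,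
     ⟨hPP σ'.1, (key σ'.1).mpr σ'.2⟩⟩
  have hΦinj : Function.Injective Φ := by
    intro σ₁ σ₂ h
    have h1 : (fun t : Fin n => if h : i ≤ (t : ℕ) ∧ (t : ℕ) < i + (n - k) then
          some (σ₁.1 ⟨(t : ℕ) - i, by omega⟩) else none)
        = (fun t : Fin n => if h : i ≤ (t : ℕ) ∧ (t : ℕ) < i + (n - k) then
          some (σ₂.1 ⟨(t : ℕ) - i, by omega⟩) else none) := congrArg Subtype.val h
    apply Subtype.ext
    apply Equiv.ext
    intro s
    have hslt := s.isLt
    have happ : ∀ σ₀ : Equiv.Perm (Fin (n - k)),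
        (fun t : Fin n => if h : i ≤ (t : ℕ) ∧ (t : ℕ) < i + (n - k) then
          some (σ₀ ⟨(t : ℕ) - i, by omega⟩) else none)
          (⟨i + (s : ℕ), by omega⟩ : Fin n) = some (σ₀ s) := by
      intro σ₀
      beta_reduce
      have hc : i ≤ ((⟨i + (s : ℕ), by omega⟩ : Fin n) : ℕ) ∧
          ((⟨i + (s : ℕ), by omega⟩ : Fin n) : ℕ) < i + (n - k) := by
        simp only
        omega
      rw [dif_pos hc]
      refine congrArg some (congrArg σ₀ (Fin.ext ?_))
      simp only
      omega
    have h2 := congrFun h1 (⟨i + (s : ℕ), by omega⟩ : Fin n)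
    exact Option.some.inj ((happ σ₁.1).symm.trans (h2.trans (happ σ₂.1)))
  have hfin : Finite {π : Fin n → Option (Fin (n - k)) // IsPPerm k π ∧ PPAvoids π p} :=
    Subtype.finite
  unfold avoidCount snk
  exact Nat.card_le_card_of_injective Φ hΦinj
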